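/- Let F : (-1,1) → ℝ be smooth with τ(η) := F(η) − ηF'(η) > 0, let b ∈ (0,1), and set F_b(η) = F(η) + bT(η) with T' = τ, T(0)=0. Suppose η̄ ∈ (-1,0] satisfies F'(η̄) = 0 and suppose there is a largest critical point η̂ of F_b in (-1, η̄). Then τ(η̂) < τ(η̄) = F(η̄). -/

import Mathlib

open Set

theorem return_time_at_largest_critical_point (F F' : ℝ → ℝ) (b : ℝ)
    (hb : b ∈ Ioo (0 : ℝ) 1)
    (hd : ∀ η ∈ Ioo (-1 : ℝ) 1, HasDerivAt F (F' η) η)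
    (hF'c : ContinuousOn F' (Ioo (-1) 1))
    (hτpos : ∀ η ∈ Ioo (-1 : ℝ) 1, 0 < F η - η * F' η)
    (ηbar : ℝ) (hηbar : ηbar ∈ Ioc (-1 : ℝ) 0) (hcritbar : F' ηbar = 0)
    (ηhat : ℝ) (hηhat : ηhat ∈ Ioo (-1 : ℝ) ηbar)
    (hcrit : F' ηhat + b * (F ηhat - ηhat * F' ηhat) = 0)
    (hlargest : ∀ η ∈ Ioo ηhat ηbar, F' η + b * (F η - η * F' η) ≠ 0) :
    F ηhat - ηhat * F' ηhat < F ηbar ∧ F ηbar - ηbar * F' ηbar = F ηbar := by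
  obtain ⟨hb0, hb1⟩ := hb
  have hsub : Icc ηhat ηbar ⊆ Ioo (-1 : ℝ) 1 := fun x hx =>
    ⟨lt_of_lt_of_le hηhat.1 hx.1, lt_of_le_of_lt (hx.2.trans hηbar.2) one_pos⟩
  have hηhatI : ηhat ∈ Ioo (-1 : ℝ) 1 := hsub ⟨le_refl _, hηhat.2.le⟩
  have hηbarI : ηbar ∈ Ioo (-1 : ℝ) 1 := hsub ⟨hηhat.2.le, le_refl _⟩
  set G : ℝ → ℝ := fun η => F' η + b * (F η - η * F' η) with hG
  have hden : ∀ x ∈ Ioo (-1 : ℝ) 1, 0 < 1 - b * x := by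
    intro x hx
    nlinarith [hx.1, hx.2]
  have hFc : ContinuousOn F (Ioo (-1 : ℝ) 1) := fun x hx =>
    (hd x hx).continuousAt.continuousWithinAt
  have hGc : ContinuousOn G (Icc ηhat ηbar) :=
    ((hF'c.mono hsub).add (continuousOn_const.mul (((hFc.mono hsub)).sub
      (continuousOn_id.mul (hF'c.mono hsub)))))
  have hGbar : 0 < G ηbar := by
    have h := hτpos ηbar hηbarI
    rw [hcritbar] at h
    simp only [hG, hcritbar]
    nlinarith
  have hGpos : ∀ x ∈ Ioc ηhat ηbar, 0 < G x := by
    intro x hx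
    rcases lt_or_eq_of_le hx.2 with hlt | heq
    · by_contra hle
      push_neg at hle
      rcases lt_or_eq_of_le hle with hneg | h0
      · obtain ⟨c, hc, hc0⟩ := intermediate_value_Ioo (le_of_lt hlt)
          (hGc.mono (Icc_subset_Icc hx.1.le le_rfl))
          (show (0 : ℝ) ∈ Ioo (G x) (G ηbar) from ⟨hneg, hGbar⟩)
        exact hlargest c ⟨hx.1.trans hc.1, hc.2⟩ hc0
      · exact hlargest x ⟨hx.1, hlt⟩ (by have h1 := h0; simp only [hG] at h1; exact h1)
    · rw [heq]; exact hGbar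
  set g : ℝ → ℝ := fun η => F η / (1 - b * η) with hgdef
  have hgderiv : ∀ x ∈ Icc ηhat ηbar, HasDerivAt g (G x / (1 - b * x) ^ 2) x := by
    intro x hx
    have hxI := hsub hx
    have hdx := hd x hxI
    have hdenx := hden x hxI
    have h2 : HasDerivAt (fun η : ℝ => 1 - b * η) (-b) x := by
      simpa using (((hasDerivAt_id x).const_mul b).const_sub (1 : ℝ))
    have h3 := hdx.div h2 (ne_of_gt hdenx)
    convert h3 using 1
    · rfl
    · rfl
    · rfl
    simp only [hG]
    ring
  have hmono : StrictMonoOn g (Icc ηhat ηbar) := by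
    apply strictMonoOn_of_deriv_pos (convex_Icc _ _)
    · exact fun x hx => (hgderiv x hx).continuousAt.continuousWithinAt
    · intro x hx
      rw [interior_Icc] at hx
      rw [(hgderiv x (Ioo_subset_Icc_self hx)).deriv]
      exact div_pos (hGpos x ⟨hx.1, hx.2.le⟩)
        (pow_pos (hden x (hsub (Ioo_subset_Icc_self hx))) 2)
  have hglt : g ηhat < g ηbar :=
    hmono (left_mem_Icc.2 hηhat.2.le) (right_mem_Icc.2 hηhat.2.le) hηhat.2
  have hdhat := hden ηhat hηhatI
  have hghat : g ηhat = F ηhat - ηhat * F' ηhat := by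
    simp only [hgdef]
    rw [div_eq_iff (ne_of_gt hdhat)]
    nlinarith [hcrit]
  have hFbar : 0 < F ηbar := by
    have := hτpos ηbar hηbarI; rw [hcritbar] at this; linarith
  have hgbar : g ηbar ≤ F ηbar := by
    simp only [hgdef]
    rw [div_le_iff₀ (hden ηbar hηbarI)]
    nlinarith [mul_nonneg hFbar.le (mul_nonneg hb0.le (neg_nonneg.2 hηbar.2))]
  constructor
  · rw [← hghat]; exact lt_of_lt_of_le hglt hgbar
  · rw [hcritbar]; ring
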